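/- Let (S, A, T, γ) be a finite MDP with γ ∈ [0,1). Let r, r' : S × A × S → ℝ be rewards related by r'(s,a,s') = λ( r(s,a,s') + γφ(s') − φ(s) ) for some λ > 0 and potential function φ : S → ℝ. Let Q and Q' be the unique fixed points of the hard Bellman optimality operators for r and r' respectively. Then Q'(s,a) = λ( Q(s,a) − φ(s) ) for all (s,a), and consequently for every state s the set of optimal actions is unchanged: { a ∈ A : Q'(s,a) = max_{a'} Q'(s,a') } = { a ∈ A : Q(s,a) = max_{a'} Q(s,a') }. -/

import Mathlib

section Aux

variable {A : Type*} [Fintype A] [Nonempty A]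

private lemma bddA (f : A → ℝ) : BddAbove (Set.range f) :=
  (Set.finite_range f).bddAbove

private lemma ciSup_add_const (f : A → ℝ) (c : ℝ) :
    (⨆ a, (f a + c)) = (⨆ a, f a) + c := by
  apply le_antisymm
  · exact ciSup_le fun a => add_le_add_left (le_ciSup (bddA f) a) c
  · have h : (⨆ a, f a) ≤ (⨆ a, (f a + c)) - c := by
      refine ciSup_le fun a => ?_
      have := le_ciSup (bddA fun a => f a + c) a
      linarith
    linarith

private lemma abs_ciSup_sub_ciSup (f g : A → ℝ) :
    |(⨆ a, f a) - ⨆ a, g a| ≤ ⨆ a, |f a - g a| := by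
  have key : ∀ f g : A → ℝ, (⨆ a, f a) - (⨆ a, g a) ≤ ⨆ a, |f a - g a| := by
    intro f g
    rw [sub_le_iff_le_add, add_comm]
    refine ciSup_le fun a => ?_
    calc f a = g a + (f a - g a) := by ring
    _ ≤ (⨆ a, g a) + ⨆ a, |f a - g a| :=
        add_le_add (le_ciSup (bddA g) a)
          ((le_abs_self _).trans (le_ciSup (bddA fun a => |f a - g a|) a))
  rw [abs_sub_le_iff]
  refine ⟨key f g, ?_⟩
  simpa [abs_sub_comm] using key g f

end Aux

theorem stmt5 {S A : Type*} [Fintype S] [Fintype A] [Nonempty S] [Nonempty A]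
    (T : S → A → S → ℝ)
    (hT0 : ∀ s a s', 0 ≤ T s a s') (hT1 : ∀ s a, ∑ s', T s a s' = 1)
    (γ : ℝ) (hγ0 : 0 ≤ γ) (hγ1 : γ < 1)
    (r r' : S → A → S → ℝ)
    (lam : ℝ) (hlam : 0 < lam) (φ : S → ℝ)
    (hshape : ∀ s a s', r' s a s' = lam * (r s a s' + γ * φ s' - φ s))
    -- `Q` and `Q'` are the (unique) fixed points of the hard Bellman optimality
    -- operators for `r` and `r'` respectively
    (Q Q' : S → A → ℝ)
    (hQ : ∀ s a, Q s a = ∑ s', T s a s' * (r s a s' + γ * ⨆ a', Q s' a'))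
    (hQ' : ∀ s a, Q' s a = ∑ s', T s a s' * (r' s a s' + γ * ⨆ a', Q' s' a')) :
    (∀ s a, Q' s a = lam * (Q s a - φ s)) ∧
    (∀ s : S, {a : A | Q' s a = ⨆ a', Q' s a'} = {a : A | Q s a = ⨆ a', Q s a'}) := by
  -- the candidate fixed point for r'
  set P : S → A → ℝ := fun s a => lam * (Q s a - φ s) with hPdef
  have hsupP : ∀ s, (⨆ a, P s a) = lam * ((⨆ a, Q s a) - φ s) := by
    intro s
    simp only [hPdef]
    calc (⨆ a, lam * (Q s a - φ s)) = ⨆ a, (lam * Q s a + -(lam * φ s)) := by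
          congr 1; ext a; ring
      _ = (⨆ a, lam * Q s a) + -(lam * φ s) := ciSup_add_const _ _
      _ = lam * ((⨆ a, Q s a) - φ s) := by
          rw [← Real.mul_iSup_of_nonneg hlam.le]; ring
  -- P satisfies the Bellman equation for r'
  have hP : ∀ s a, P s a = ∑ s', T s a s' * (r' s a s' + γ * ⨆ a', P s' a') := by
    intro s a
    have : ∀ s', r' s a s' + γ * ⨆ a', P s' a'
        = lam * (r s a s' + γ * ⨆ a', Q s' a') - lam * φ s := by
      intro s'
      rw [hshape, hsupP]
      ring
    simp only [this, mul_sub]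
    rw [Finset.sum_sub_distrib, ← Finset.sum_mul, hT1, one_mul]
    simp only [hPdef]
    rw [mul_sub]
    congr 1
    rw [hQ s a, Finset.mul_sum]
    congr 1; ext s'; ring
  -- contraction argument: D = Q' - P is zero
  have hmain : ∀ s a, Q' s a = P s a := by
    set M : ℝ := ⨆ p : S × A, |Q' p.1 p.2 - P p.1 p.2| with hM
    have hbdd : BddAbove (Set.range fun p : S × A => |Q' p.1 p.2 - P p.1 p.2|) :=
      (Set.finite_range _).bddAbove
    have hle : ∀ s a, |Q' s a - P s a| ≤ M := fun s a =>
      le_ciSup hbdd (⟨s, a⟩ : S × A)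
    have hstep : ∀ s a, |Q' s a - P s a| ≤ γ * M := by
      intro s a
      rw [hQ' s a, hP s a, ← Finset.sum_sub_distrib]
      have h1 : ∀ s', T s a s' * (r' s a s' + γ * ⨆ a', Q' s' a')
          - T s a s' * (r' s a s' + γ * ⨆ a', P s' a')
          = T s a s' * γ * ((⨆ a', Q' s' a') - ⨆ a', P s' a') := by
        intro s'; ring
      simp only [h1]
      calc |∑ s', T s a s' * γ * ((⨆ a', Q' s' a') - ⨆ a', P s' a')|
          ≤ ∑ s', |T s a s' * γ * ((⨆ a', Q' s' a') - ⨆ a', P s' a')| :=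
            Finset.abs_sum_le_sum_abs _ _
        _ ≤ ∑ s', T s a s' * (γ * M) := by
            refine Finset.sum_le_sum fun s' _ => ?_
            rw [abs_mul, abs_of_nonneg (mul_nonneg (hT0 s a s') hγ0), mul_assoc]
            refine mul_le_mul_of_nonneg_left ?_ (hT0 s a s')
            refine mul_le_mul_of_nonneg_left ?_ hγ0
            exact (abs_ciSup_sub_ciSup _ _).trans
              (ciSup_le fun a' => hle s' a')
        _ = γ * M := by rw [← Finset.sum_mul, hT1, one_mul]
    have hM0 : 0 ≤ M := le_trans (abs_nonneg _) (hle Classical.ofNonempty Classical.ofNonempty)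
    have hMγ : M ≤ γ * M := ciSup_le fun p => hstep p.1 p.2
    have hM0' : M ≤ 0 := by nlinarith
    intro s a
    have := (hle s a).trans (le_antisymm hM0' hM0).le
    have h2 : |Q' s a - P s a| = 0 := le_antisymm (by linarith [hle s a]) (abs_nonneg _)
    have := abs_eq_zero.mp h2
    linarith
  refine ⟨hmain, fun s => ?_⟩
  ext a
  simp only [Set.mem_setOf_eq, hmain, hsupP]
  simp only [hPdef]
  constructor
  · intro h
    have := mul_left_cancel₀ (ne_of_gt hlam) h
    linarith
  · intro h
    rw [h]
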